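/- a^t-tight closure of ideals is openly persistent along localization at single elements: let p be a prime, let R be a Noetherian commutative ring of characteristic p, let n ≥ 0, let a₁,…,aₙ be ideals of R with aᵢ ∩ R° ≠ ∅ for each i, and let t₁,…,tₙ be nonnegative real numbers. Let J be an ideal of R, let f ∈ R, and let z ∈ R lie in the a₁^{t₁}⋯aₙ^{tₙ}-tight closure of J. Then the image z/1 of z in R_f lies in the (a₁·R_f)^{t₁}⋯(aₙ·R_f)^{tₙ}-tight closure of J·R_f, and moreover each extended ideal aᵢ·R_f meets (R_f)°. -/

import Mathlib

/-- `offMinimal S` is `S°`, the set of elements of `S` lying outside every minimal prime. -/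
def offMinimal (S : Type*) [CommRing S] : Set S :=
  {c : S | ∀ P ∈ minimalPrimes S, c ∉ P}

/-- The bracket power `J^[q]`, generated by `q`-th powers of elements of `J`. -/
def bracketPow {S : Type*} [CommRing S] (J : Ideal S) (q : ℕ) : Ideal S :=
  Ideal.span ((fun a => a ^ q) '' (J : Set S))

/-- The tight closure `J^*` of an ideal `J` in a ring of characteristic `p`. -/
def tightClosure (p : ℕ) {S : Type*} [CommRing S] (J : Ideal S) : Set S :=
  {z : S | ∃ c ∈ offMinimal S, ∃ e₀ : ℕ, ∀ e : ℕ, e₀ ≤ e →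
    c * z ^ p ^ e ∈ bracketPow J (p ^ e)}

/-- The `a₁^{t₁} ⋯ aₙ^{tₙ}`-tight closure of an ideal `J` in a ring of characteristic `p`:
`z` belongs to it if there are `c ∈ S°` and a power `p^e₀` such that
`c ⬝ a₁^{⌈t₁ q⌉} ⋯ aₙ^{⌈tₙ q⌉} ⬝ z^q ⊆ J^[q]` for all `q = p^e ≥ p^e₀`. -/
def atTightClosure (p : ℕ) {S : Type*} [CommRing S] {n : ℕ} (a : Fin n → Ideal S)
    (t : Fin n → ℝ) (J : Ideal S) : Set S :=
  {z : S | ∃ c ∈ offMinimal S, ∃ e₀ : ℕ, ∀ e : ℕ, e₀ ≤ e →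
    ∀ x ∈ (∏ i, a i ^ ⌈t i * (p : ℝ) ^ e⌉₊ : Ideal S),
      c * x * z ^ p ^ e ∈ bracketPow J (p ^ e)}

/-- The contraction of a minimal prime of a localization is a minimal prime. -/
lemma comap_mem_minimalPrimes_of_isLocalization {R S : Type*} [CommRing R] [CommRing S]
    [Algebra R S] (M : Submonoid R) [IsLocalization M S] {Q : Ideal S}
    (hQ : Q ∈ minimalPrimes S) :
    Q.comap (algebraMap R S) ∈ minimalPrimes R := by
  have hQp : Q.IsPrime := hQ.1.1
  obtain ⟨hPp, hdisj⟩ := (IsLocalization.isPrime_iff_isPrime_disjoint M S Q).mp hQp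
  refine ⟨⟨hPp, bot_le⟩, ?_⟩
  rintro P' ⟨hP'p, -⟩ hle
  have hdisj' : Disjoint (M : Set R) (P' : Set R) :=
    Set.disjoint_of_subset_right hle hdisj
  have hP'map : (P'.map (algebraMap R S)).IsPrime :=
    IsLocalization.isPrime_of_isPrime_disjoint M S P' hP'p hdisj'
  have hmaple : P'.map (algebraMap R S) ≤ Q := by
    have := Ideal.map_mono (f := algebraMap R S) hle
    rwa [IsLocalization.map_comap M S Q] at this
  have hQle : Q ≤ P'.map (algebraMap R S) := hQ.2 ⟨hP'map, bot_le⟩ hmaple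
  have := Ideal.comap_mono (f := algebraMap R S) hQle
  rw [show Ideal.comap (algebraMap R S) (Ideal.map (algebraMap R S) P') = P' from
    IsLocalization.comap_map_of_isPrime_disjoint M S hP'p hdisj'] at this
  exact this

lemma algebraMap_mem_offMinimal {R S : Type*} [CommRing R] [CommRing S]
    [Algebra R S] (M : Submonoid R) [IsLocalization M S] {c : R}
    (hc : c ∈ offMinimal R) : algebraMap R S c ∈ offMinimal S := by
  intro Q hQ hcQ
  exact hc _ (comap_mem_minimalPrimes_of_isLocalization M hQ) hcQ

lemma map_bracketPow_le {R S : Type*} [CommRing R] [CommRing S] (φ : R →+* S)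
    (J : Ideal R) (q : ℕ) :
    (bracketPow J q).map φ ≤ bracketPow (J.map φ) q := by
  rw [bracketPow, Ideal.map_span]
  refine Ideal.span_mono ?_
  rintro _ ⟨_, ⟨x, hx, rfl⟩, rfl⟩
  exact ⟨φ x, Ideal.mem_map_of_mem φ hx, (map_pow φ x q).symm⟩

/-- `a^t`-tight closure of ideals is openly persistent along localization at single
elements, and the extended ideals `aᵢ R_f` still meet `(R_f)°`. -/
theorem atTightClosure_openlyPersistent (p : ℕ) (hp : p.Prime)
    {R : Type*} [CommRing R] [IsNoetherianRing R] [CharP R p]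
    {n : ℕ} (a : Fin n → Ideal R) (ha : ∀ i, ∃ c ∈ offMinimal R, c ∈ a i)
    (t : Fin n → ℝ) (ht : ∀ i, 0 ≤ t i)
    (J : Ideal R) (f : R) (z : R) (hz : z ∈ atTightClosure p a t J) :
    algebraMap R (Localization.Away f) z
      ∈ atTightClosure p (fun i => (a i).map (algebraMap R (Localization.Away f))) t
          (J.map (algebraMap R (Localization.Away f))) ∧
    ∀ i, ∃ c ∈ offMinimal (Localization.Away f),
      c ∈ (a i).map (algebraMap R (Localization.Away f)) := by
  set S := Localization.Away f
  set φ : R →+* S := algebraMap R S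
  constructor
  · obtain ⟨c, hc, e₀, h⟩ := hz
    refine ⟨φ c, algebraMap_mem_offMinimal (Submonoid.powers f) hc, e₀, ?_⟩
    intro e he x hx
    have hxmem : x ∈ (∏ i, a i ^ ⌈t i * (p : ℝ) ^ e⌉₊ : Ideal R).map φ := by
      have : (∏ i, ((a i).map φ) ^ ⌈t i * (p : ℝ) ^ e⌉₊ : Ideal S)
          = (∏ i, a i ^ ⌈t i * (p : ℝ) ^ e⌉₊ : Ideal R).map φ := by
        rw [show (Ideal.map φ : Ideal R → Ideal S) = Ideal.mapHom φ from rfl, map_prod]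
        simp [Ideal.map_pow]
      rwa [this] at hx
    clear hx
    rw [Ideal.map] at hxmem
    induction hxmem using Submodule.span_induction with
    | mem x hxm =>
      obtain ⟨x₀, hx₀, rfl⟩ := hxm
      have : φ c * φ x₀ * φ z ^ p ^ e = φ (c * x₀ * z ^ p ^ e) := by
        simp [map_mul, map_pow]
      rw [this]
      exact map_bracketPow_le φ J (p ^ e) (Ideal.mem_map_of_mem φ (h e he x₀ hx₀))
    | zero => simp
    | add x y _ _ hx hy =>
      have : φ c * (x + y) * φ z ^ p ^ e
          = φ c * x * φ z ^ p ^ e + φ c * y * φ z ^ p ^ e := by ring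
      rw [this]; exact add_mem hx hy
    | smul r x _ hx =>
      have : φ c * (r • x) * φ z ^ p ^ e = r • (φ c * x * φ z ^ p ^ e) := by
        simp [smul_eq_mul]; ring
      rw [this]; exact Submodule.smul_mem _ r hx
  · intro i
    obtain ⟨c, hc, hca⟩ := ha i
    exact ⟨φ c, algebraMap_mem_offMinimal (Submonoid.powers f) hc,
      Ideal.mem_map_of_mem φ hca⟩
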